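/- Let μ be a σ-finite measure on 𝒳 and let q, q', r be probability densities with respect to μ, with associated probability measures Q = q·μ, Q' = q'·μ, R = r·μ. With ψ₂(x) = (x−1)/√(x²+1) extended by ψ₂(+∞) = 1 and the conventions 0/0 = 1 and a/0 = +∞ for a > 0, one has ∫ ψ₂(√(q'(x)/q(x))) dR(x) ≤ 4.97·h²(R,Q) − 0.083·h²(R,Q') and ∫ ψ₂²(√(q'(x)/q(x))) dR(x) ≤ (3+2√2)·[h²(R,Q) + h²(R,Q')], where h² denotes squared Hellinger distance. -/
import Mathlib


open MeasureTheory ENNReal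

open Classical in
/-- The ratio `q'/q` in `[0,+∞]`, with the conventions `0/0 = 1` and `a/0 = +∞` for
`a > 0` (the latter being automatic in `ℝ≥0∞`). -/
noncomputable def densityRatio {𝒳 : Type*} (q q' : 𝒳 → ℝ≥0∞) (x : 𝒳) : ℝ≥0∞ :=
  if q x = 0 ∧ q' x = 0 then 1 else q' x / q x

/-- `ψ₂(√z)` for `z ∈ [0,+∞]`, where `ψ₂(x) = (x−1)/√(x²+1)` and `ψ₂(+∞) = 1`. -/
noncomputable def psi2OfSqrt (z : ℝ≥0∞) : ℝ :=
  if z = ⊤ then 1 else (Real.sqrt z.toReal - 1) / Real.sqrt (z.toReal + 1)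

/-- Squared Hellinger distance `(1/2)∫(√a − √b)² dμ` between the probabilities of
densities `a` and `b` with respect to `μ`. -/
noncomputable def hellingerSqDens {𝒳 : Type*} [MeasurableSpace 𝒳] (μ : Measure 𝒳)
    (a b : 𝒳 → ℝ≥0∞) : ℝ :=
  (1/2) * ∫ x, (Real.sqrt (a x).toReal - Real.sqrt (b x).toReal) ^ 2 ∂μ

noncomputable def w2 : ℝ := Real.sqrt 2
lemma w2_sq : w2^2 = 2 := Real.sq_sqrt (by norm_num)
lemma w2_nonneg : 0 ≤ w2 := Real.sqrt_nonneg 2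
lemma w2_lb : 1.4142 ≤ w2 := by nlinarith [w2_sq, w2_nonneg]
lemma w2_ub : w2 ≤ 1.4143 := by nlinarith [w2_sq, w2_nonneg]

lemma psd1 (x y : ℝ) :
    0 ≤ (4887/1000)*x^2 + (2*w2-166/1000)*(x*y) + (w2-83/1000)*y^2 := by
  nlinarith [sq_nonneg (x + 0.2724*y), sq_nonneg x, sq_nonneg y, sq_nonneg (x+y), sq_nonneg (x-y), w2_lb, w2_ub]

lemma psd2 (x y : ℝ) :
    0 ≤ (4887/2000 - w2)*x^2 + (-83/1000)*(x*y) + (w2/4-83/2000)*y^2 := by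
  nlinarith [sq_nonneg (x - 0.0403*y), sq_nonneg x, sq_nonneg y, sq_nonneg (x+y), sq_nonneg (x-y), w2_lb, w2_ub]

lemma psd3 (x y : ℝ) :
    0 ≤ (w2*4887/2000-1)*x^2 + (-2+83*w2/1000)*(x*y) + (13/10-1083*w2/2000)*y^2 := by
  nlinarith [sq_nonneg (x - 0.3833*y), sq_nonneg x, sq_nonneg y, sq_nonneg (x+y), sq_nonneg (x-y), w2_lb, w2_ub]

lemma psd4 (x y : ℝ) :
    0 ≤ ((8887-4887*w2)/2000)*x^2 + (83/1000-83*w2/1000)*(x*y) + ((-683+583*w2)/2000)*y^2 := by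
  nlinarith [sq_nonneg (x - 0.0174*y), sq_nonneg x, sq_nonneg y, sq_nonneg (x+y), sq_nonneg (x-y), w2_lb, w2_ub]

noncomputable def Rs (s a b : ℝ) : ℝ :=
  (4887/2000)*s^2 + ((497/100 - w2/2)/2)*a^2 + ((w2/2 - 83/1000)/2)*b^2
    - (497/100)*(s*a) + (83/1000)*(s*b)

lemma poly_case1 (s a b : ℝ) (ha : 0 ≤ a) (hab : a ≤ b) :
    w2*(s^2*(b-a)) ≤ (a+b)*Rs s a b := by
  have key : (a+b)*Rs s a b - w2*(s^2*(b-a))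
      = a*((4887/1000)*(a-s)^2 + (2*w2-166/1000)*((a-s)*(b-a)) + (w2-83/1000)*(b-a)^2)
      + (b-a)*((4887/2000 - w2)*(a-s)^2 + (-83/1000)*((a-s)*(b-a)) + (w2/4-83/2000)*(b-a)^2) := by
    simp only [Rs]; ring
  nlinarith [mul_nonneg ha (psd1 (a-s) (b-a)), mul_nonneg (sub_nonneg.2 hab) (psd2 (a-s) (b-a)), key]

lemma poly_case2 (s a b : ℝ) (ha : 0 ≤ a) (hb : 0 ≤ b) (hab : b ≤ a) :
    s^2*(b-a) ≤ (a+(w2-1)*b)*Rs s a b := by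
  have key : (a+(w2-1)*b)*Rs s a b - s^2*(b-a)
      = a*((w2*4887/2000-1)*(a-s)^2 + (-2+83*w2/1000)*((a-s)*(a-b)) + (13/10-1083*w2/2000)*(a-b)^2)
      + (a-b)*(((8887-4887*w2)/2000)*(a-s)^2 + (83/1000-83*w2/1000)*((a-s)*(a-b)) + ((-683+583*w2)/2000)*(a-b)^2)
      + b*((a-s)^2 + (1/5)*(a-b)^2) := by
    simp only [Rs]; linear_combination (b*(b^2-a^2)/4) * w2_sq
  nlinarith [mul_nonneg ha (psd3 (a-s) (a-b)), mul_nonneg (sub_nonneg.2 hab) (psd4 (a-s) (a-b)),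
    mul_nonneg hb (add_nonneg (sq_nonneg (a-s)) (by positivity : (0:ℝ) ≤ (1/5)*(a-b)^2)), key]

lemma pointwise1 (s a b : ℝ) (hs : 0 ≤ s) (ha : 0 ≤ a) (hb : 0 ≤ b) :
    s^2 * ((b-a)/Real.sqrt (a^2+b^2)) ≤ Rs s a b := by
  rcases eq_or_lt_of_le (by positivity : (0:ℝ) ≤ a^2+b^2) with h0 | hpos
  · have ha0 : a = 0 := by nlinarith [sq_nonneg a, sq_nonneg b]
    have hb0 : b = 0 := by nlinarith [sq_nonneg a, sq_nonneg b]
    subst ha0; subst hb0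
    simp [Rs]
    positivity
  set t := Real.sqrt (a^2+b^2) with htdef
  have ht0 : 0 < t := Real.sqrt_pos.2 hpos
  have ht2 : t^2 = a^2+b^2 := Real.sq_sqrt hpos.le
  rw [mul_div_assoc']
  rcases le_total a b with hab | hab
  · have habpos : 0 < a + b := by nlinarith
    have h1 : a + b ≤ w2*t := by
      have h2 : (a+b)^2 ≤ (w2*t)^2 := by nlinarith [sq_nonneg (a-b), w2_sq]
      nlinarith [mul_pos (lt_of_lt_of_le (by norm_num : (0:ℝ) < 1.4142) w2_lb) ht0]
    have hnum : 0 ≤ s^2*(b-a) := by nlinarith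
    calc s^2*(b-a)/t ≤ s^2*(b-a)/((a+b)/w2) := by
          apply div_le_div_of_nonneg_left hnum (div_pos habpos (by nlinarith [w2_lb])) _
          rw [div_le_iff₀ (by nlinarith [w2_lb] : (0:ℝ) < w2)]
          linarith [mul_comm t w2]
      _ ≤ Rs s a b := by
          rw [div_div_eq_mul_div, div_le_iff₀ habpos]
          calc s^2*(b-a)*w2 = w2*(s^2*(b-a)) := by ring
            _ ≤ (a+b)*Rs s a b := poly_case1 s a b ha hab
            _ = Rs s a b * (a+b) := by ring
  · have hD : 0 < a + (w2-1)*b := by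
      rcases eq_or_lt_of_le ha with h | h
      · exfalso; nlinarith
      · nlinarith [w2_lb, mul_nonneg (by nlinarith [w2_lb] : (0:ℝ) ≤ w2-1) hb]
    have htD : t ≤ a + (w2-1)*b := by
      have h2 : t^2 ≤ (a + (w2-1)*b)^2 := by
        nlinarith [w2_sq, mul_nonneg (by nlinarith [w2_lb] : (0:ℝ) ≤ w2-1) (mul_nonneg hb (sub_nonneg.2 hab))]
      nlinarith
    have hnum : s^2*(b-a) ≤ 0 := by nlinarith
    calc s^2*(b-a)/t ≤ s^2*(b-a)/(a+(w2-1)*b) := by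
          rw [div_le_div_iff₀ ht0 hD]
          exact mul_le_mul_of_nonpos_left htD hnum
      _ ≤ Rs s a b := by
          rw [div_le_iff₀ hD]
          calc s^2*(b-a) ≤ (a+(w2-1)*b)*Rs s a b := poly_case2 s a b ha hb hab
            _ = Rs s a b * (a+(w2-1)*b) := by ring

lemma pointwise2 (s a b : ℝ) (hs : 0 ≤ s) (ha : 0 ≤ a) (hb : 0 ≤ b) :
    s^2 * ((b-a)/Real.sqrt (a^2+b^2))^2 ≤ ((3+2*w2)/2) * ((s-a)^2+(s-b)^2) := by
  rcases eq_or_lt_of_le (by positivity : (0:ℝ) ≤ a^2+b^2) with h0 | hpos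
  · have ha0 : a = 0 := by nlinarith [sq_nonneg a, sq_nonneg b]
    have hb0 : b = 0 := by nlinarith [sq_nonneg a, sq_nonneg b]
    subst ha0; subst hb0
    simp
    nlinarith [w2_nonneg, sq_nonneg s, sq_nonneg (s*s)]
  have ht2 : (Real.sqrt (a^2+b^2))^2 = a^2+b^2 := Real.sq_sqrt hpos.le
  rw [div_pow, ht2, mul_div_assoc', div_le_iff₀ hpos]
  nlinarith [sq_nonneg (a*(s-a)+b*(s-b)),
    mul_nonneg w2_nonneg (mul_nonneg hpos.le (by positivity : (0:ℝ) ≤ (s-a)^2+(s-b)^2))]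

lemma psi_eq {𝒳 : Type*} (q q' : 𝒳 → ℝ≥0∞) (x : 𝒳) (hq : q x ≠ ⊤) (hq' : q' x ≠ ⊤) :
    psi2OfSqrt (densityRatio q q' x)
      = (Real.sqrt (q' x).toReal - Real.sqrt (q x).toReal)
        / Real.sqrt ((q x).toReal + (q' x).toReal) := by
  by_cases h0 : q x = 0
  · by_cases h0' : q' x = 0
    · simp [densityRatio, psi2OfSqrt, h0, h0', Real.sqrt_one]
    · have hpos : 0 < (q' x).toReal := ENNReal.toReal_pos h0' hq'
      have hs : 0 < Real.sqrt (q' x).toReal := Real.sqrt_pos.2 hpos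
      simp only [densityRatio, h0, h0', and_false, if_false]
      rw [ENNReal.div_zero h0']
      simp only [psi2OfSqrt, if_pos rfl]
      simp [div_self hs.ne']
  · have hratio : q' x / q x ≠ ⊤ := (ENNReal.div_lt_top hq' h0).ne
    have hqpos : 0 < (q x).toReal := ENNReal.toReal_pos h0 hq
    have hsq : 0 < Real.sqrt (q x).toReal := Real.sqrt_pos.2 hqpos
    have hsum : 0 < Real.sqrt ((q x).toReal + (q' x).toReal) :=
      Real.sqrt_pos.2 (by positivity)
    simp only [densityRatio, h0, false_and, if_false]
    simp only [psi2OfSqrt, if_neg hratio, ENNReal.toReal_div]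
    have h1 : (q' x).toReal / (q x).toReal + 1
        = ((q x).toReal + (q' x).toReal) / (q x).toReal := by
      field_simp
      ring
    rw [Real.sqrt_div ENNReal.toReal_nonneg, h1, Real.sqrt_div (by positivity)]
    have key : ∀ (X Y T : ℝ), X ≠ 0 → T ≠ 0 → (Y/X - 1)/(T/X) = (Y-X)/T := by
      intro X Y T hX hT; field_simp
    exact key _ _ _ hsq.ne' hsum.ne'

/-- For probability densities `q, q', r` w.r.t. a σ-finite measure `μ`, with
`R = r·μ`, `Q = q·μ`, `Q' = q'·μ`, one has
`∫ ψ₂(√(q'/q)) dR ≤ 4.97·h²(R,Q) − 0.083·h²(R,Q')` and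
`∫ ψ₂²(√(q'/q)) dR ≤ (3+2√2)·[h²(R,Q) + h²(R,Q')]`. -/
theorem psi2_expectation_bounds
    {𝒳 : Type*} [MeasurableSpace 𝒳] (μ : Measure 𝒳) [SigmaFinite μ]
    (q q' r : 𝒳 → ℝ≥0∞) (hq : Measurable q) (hq' : Measurable q') (hr : Measurable r)
    (hq1 : ∫⁻ x, q x ∂μ = 1) (hq'1 : ∫⁻ x, q' x ∂μ = 1) (hr1 : ∫⁻ x, r x ∂μ = 1) :
    (∫ x, psi2OfSqrt (densityRatio q q' x) ∂(μ.withDensity r) ≤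
      4.97 * hellingerSqDens μ r q - 0.083 * hellingerSqDens μ r q') ∧
    ∫ x, (psi2OfSqrt (densityRatio q q' x)) ^ 2 ∂(μ.withDensity r) ≤
      (3 + 2 * Real.sqrt 2) * (hellingerSqDens μ r q + hellingerSqDens μ r q') := by
  classical
  have hrae : ∀ᵐ x ∂μ, r x ≠ ⊤ := by
    filter_upwards [ae_lt_top hr (by rw [hr1]; exact one_ne_top)] with x hx using hx.ne
  have hqae : ∀ᵐ x ∂μ, q x ≠ ⊤ := by
    filter_upwards [ae_lt_top hq (by rw [hq1]; exact one_ne_top)] with x hx using hx.ne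
  have hq'ae : ∀ᵐ x ∂μ, q' x ≠ ⊤ := by
    filter_upwards [ae_lt_top hq' (by rw [hq'1]; exact one_ne_top)] with x hx using hx.ne
  -- measurability of real functions
  have hSm : Measurable (fun x => Real.sqrt (r x).toReal) :=
    Real.continuous_sqrt.measurable.comp hr.ennreal_toReal
  have hAm : Measurable (fun x => Real.sqrt (q x).toReal) :=
    Real.continuous_sqrt.measurable.comp hq.ennreal_toReal
  have hBm : Measurable (fun x => Real.sqrt (q' x).toReal) :=
    Real.continuous_sqrt.measurable.comp hq'.ennreal_toReal
  have hDm : Measurable (fun x => Real.sqrt ((q x).toReal + (q' x).toReal)) :=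
    Real.continuous_sqrt.measurable.comp (hq.ennreal_toReal.add hq'.ennreal_toReal)
  have hgm : Measurable (fun x =>
      (Real.sqrt (q' x).toReal - Real.sqrt (q x).toReal)
        / Real.sqrt ((q x).toReal + (q' x).toReal)) := (hBm.sub hAm).div hDm
  -- squares
  have hS2 : ∀ x : 𝒳, (Real.sqrt (r x).toReal)^2 = (r x).toReal :=
    fun x => Real.sq_sqrt ENNReal.toReal_nonneg
  have hA2 : ∀ x : 𝒳, (Real.sqrt (q x).toReal)^2 = (q x).toReal :=
    fun x => Real.sq_sqrt ENNReal.toReal_nonneg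
  have hB2 : ∀ x : 𝒳, (Real.sqrt (q' x).toReal)^2 = (q' x).toReal :=
    fun x => Real.sq_sqrt ENNReal.toReal_nonneg
  -- integrability of densities
  have hrInt : Integrable (fun x => (r x).toReal) μ :=
    integrable_toReal_of_lintegral_ne_top hr.aemeasurable (by rw [hr1]; exact one_ne_top)
  have hqInt : Integrable (fun x => (q x).toReal) μ :=
    integrable_toReal_of_lintegral_ne_top hq.aemeasurable (by rw [hq1]; exact one_ne_top)
  have hq'Int : Integrable (fun x => (q' x).toReal) μ :=
    integrable_toReal_of_lintegral_ne_top hq'.aemeasurable (by rw [hq'1]; exact one_ne_top)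
  have hrI1 : ∫ x, (r x).toReal ∂μ = 1 := by
    rw [integral_toReal hr.aemeasurable (ae_lt_top hr (by rw [hr1]; exact one_ne_top)), hr1]
    simp
  have hqI1 : ∫ x, (q x).toReal ∂μ = 1 := by
    rw [integral_toReal hq.aemeasurable (ae_lt_top hq (by rw [hq1]; exact one_ne_top)), hq1]
    simp
  have hq'I1 : ∫ x, (q' x).toReal ∂μ = 1 := by
    rw [integral_toReal hq'.aemeasurable (ae_lt_top hq' (by rw [hq'1]; exact one_ne_top)), hq'1]
    simp
  -- integrability of cross products
  have hSA : Integrable (fun x => Real.sqrt (r x).toReal * Real.sqrt (q x).toReal) μ := by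
    refine (hrInt.add hqInt).mono' (hSm.mul hAm).aestronglyMeasurable
      (Filter.Eventually.of_forall fun x => ?_)
    rw [Real.norm_eq_abs, abs_of_nonneg (mul_nonneg (Real.sqrt_nonneg _) (Real.sqrt_nonneg _))]
    simp only [Pi.add_apply]
    nlinarith [sq_nonneg (Real.sqrt (r x).toReal - Real.sqrt (q x).toReal), hS2 x, hA2 x]
  have hSB : Integrable (fun x => Real.sqrt (r x).toReal * Real.sqrt (q' x).toReal) μ := by
    refine (hrInt.add hq'Int).mono' (hSm.mul hBm).aestronglyMeasurable
      (Filter.Eventually.of_forall fun x => ?_)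
    rw [Real.norm_eq_abs, abs_of_nonneg (mul_nonneg (Real.sqrt_nonneg _) (Real.sqrt_nonneg _))]
    simp only [Pi.add_apply]
    nlinarith [sq_nonneg (Real.sqrt (r x).toReal - Real.sqrt (q' x).toReal), hS2 x, hB2 x]
  -- |g| ≤ 1
  have hgle : ∀ x : 𝒳, |(Real.sqrt (q' x).toReal - Real.sqrt (q x).toReal)
      / Real.sqrt ((q x).toReal + (q' x).toReal)| ≤ 1 := by
    intro x
    have hnum : |Real.sqrt (q' x).toReal - Real.sqrt (q x).toReal|
        ≤ Real.sqrt ((q x).toReal + (q' x).toReal) := by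
      rw [← Real.sqrt_sq_eq_abs]
      apply Real.sqrt_le_sqrt
      nlinarith [hA2 x, hB2 x, mul_nonneg (Real.sqrt_nonneg (q x).toReal) (Real.sqrt_nonneg (q' x).toReal)]
    rw [abs_div, abs_of_nonneg (Real.sqrt_nonneg _)]
    rcases eq_or_lt_of_le (Real.sqrt_nonneg ((q x).toReal + (q' x).toReal)) with h | h
    · rw [← h, _root_.div_zero]; norm_num
    · exact div_le_one_of_le₀ hnum (Real.sqrt_nonneg _)
  -- conversion of withDensity integral
  have hwd : μ.withDensity r = μ.withDensity (fun x => ((r x).toNNReal : ℝ≥0∞)) :=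
    withDensity_congr_ae (hrae.mono fun x hx => (ENNReal.coe_toNNReal hx).symm)
  have hconv : ∀ f : 𝒳 → ℝ, ∫ x, f x ∂(μ.withDensity r) = ∫ x, (r x).toReal * f x ∂μ := by
    intro f
    rw [hwd, integral_withDensity_eq_integral_smul hr.ennreal_toNNReal f]
    congr 1
  -- hellinger computations
  have hellExpand : ∀ (p : 𝒳 → ℝ≥0∞), Measurable p → Integrable (fun x => (p x).toReal) μ →
      (∫ x, (p x).toReal ∂μ = 1) →
      (∀ x : 𝒳, (Real.sqrt (p x).toReal)^2 = (p x).toReal) →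
      Integrable (fun x => Real.sqrt (r x).toReal * Real.sqrt (p x).toReal) μ →
      hellingerSqDens μ r p = 1 - ∫ x, Real.sqrt (r x).toReal * Real.sqrt (p x).toReal ∂μ := by
    intro p hp hpInt hpI1 hp2 hSP
    rw [hellingerSqDens]
    have he : ∫ x, (Real.sqrt (r x).toReal - Real.sqrt (p x).toReal)^2 ∂μ
        = ∫ x, (((r x).toReal + (p x).toReal)
            - 2*(Real.sqrt (r x).toReal * Real.sqrt (p x).toReal)) ∂μ :=
      integral_congr_ae (Filter.Eventually.of_forall fun x => by
        dsimp only; rw [sub_sq, hS2 x, hp2 x]; ring)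
    have IA : Integrable (fun x => (r x).toReal + (p x).toReal) μ := hrInt.add hpInt
    rw [he, integral_sub IA (hSP.const_mul 2),
      integral_add hrInt hpInt, hrI1, hpI1, integral_const_mul]
    ring
  have hH1 : hellingerSqDens μ r q
      = 1 - ∫ x, Real.sqrt (r x).toReal * Real.sqrt (q x).toReal ∂μ :=
    hellExpand q hq hqInt hqI1 hA2 hSA
  have hH2 : hellingerSqDens μ r q'
      = 1 - ∫ x, Real.sqrt (r x).toReal * Real.sqrt (q' x).toReal ∂μ :=
    hellExpand q' hq' hq'Int hq'I1 hB2 hSB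
  -- ∫(S-A)^2 integrable
  have hIsubA : Integrable (fun x => (Real.sqrt (r x).toReal - Real.sqrt (q x).toReal)^2) μ := by
    refine ((hrInt.add hqInt).sub (hSA.const_mul 2)).congr
      (Filter.Eventually.of_forall fun x => ?_)
    simp only [Pi.add_apply, Pi.sub_apply]
    rw [sub_sq, hS2 x, hA2 x]; ring
  have hIsubB : Integrable (fun x => (Real.sqrt (r x).toReal - Real.sqrt (q' x).toReal)^2) μ := by
    refine ((hrInt.add hq'Int).sub (hSB.const_mul 2)).congr
      (Filter.Eventually.of_forall fun x => ?_)
    simp only [Pi.add_apply, Pi.sub_apply]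
    rw [sub_sq, hS2 x, hB2 x]; ring
  constructor
  · -- first inequality
    have hptS : ∀ x : 𝒳, (Real.sqrt (r x).toReal)^2
        * ((Real.sqrt (q' x).toReal - Real.sqrt (q x).toReal)
            / Real.sqrt ((q x).toReal + (q' x).toReal))
        ≤ Rs (Real.sqrt (r x).toReal) (Real.sqrt (q x).toReal) (Real.sqrt (q' x).toReal) := by
      intro x
      have h := pointwise1 (Real.sqrt (r x).toReal) (Real.sqrt (q x).toReal)
        (Real.sqrt (q' x).toReal) (Real.sqrt_nonneg _) (Real.sqrt_nonneg _) (Real.sqrt_nonneg _)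
      rw [hA2 x, hB2 x] at h
      exact h
    have hInt1 : Integrable (fun x => (Real.sqrt (r x).toReal)^2
        * ((Real.sqrt (q' x).toReal - Real.sqrt (q x).toReal)
            / Real.sqrt ((q x).toReal + (q' x).toReal))) μ := by
      refine hrInt.mono' ((hSm.pow_const 2).mul hgm).aestronglyMeasurable
        (Filter.Eventually.of_forall fun x => ?_)
      rw [Real.norm_eq_abs, abs_mul, abs_of_nonneg (sq_nonneg _)]
      calc (Real.sqrt (r x).toReal)^2 * |(Real.sqrt (q' x).toReal - Real.sqrt (q x).toReal)
            / Real.sqrt ((q x).toReal + (q' x).toReal)|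
            ≤ (Real.sqrt (r x).toReal)^2 * 1 :=
            mul_le_mul_of_nonneg_left (hgle x) (sq_nonneg _)
        _ = (r x).toReal := by rw [mul_one, hS2 x]
    have hRsEq : (fun x => Rs (Real.sqrt (r x).toReal) (Real.sqrt (q x).toReal)
        (Real.sqrt (q' x).toReal))
        = fun x => (((4887/2000)*(r x).toReal + ((497/100 - w2/2)/2)*(q x).toReal
            + ((w2/2 - 83/1000)/2)*(q' x).toReal)
          - (497/100)*(Real.sqrt (r x).toReal * Real.sqrt (q x).toReal))
          + (83/1000)*(Real.sqrt (r x).toReal * Real.sqrt (q' x).toReal) := by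
      funext x
      simp only [Rs]
      rw [hS2 x, hA2 x, hB2 x]
      try ring
    have hRsInt : Integrable (fun x => Rs (Real.sqrt (r x).toReal) (Real.sqrt (q x).toReal)
        (Real.sqrt (q' x).toReal)) μ := by
      rw [hRsEq]
      exact ((((hrInt.const_mul _).add (hqInt.const_mul _)).add (hq'Int.const_mul _)).sub
        (hSA.const_mul _)).add (hSB.const_mul _)
    have hRsI : ∫ x, Rs (Real.sqrt (r x).toReal) (Real.sqrt (q x).toReal)
        (Real.sqrt (q' x).toReal) ∂μ
        = 4887/1000 - (497/100)*(∫ x, Real.sqrt (r x).toReal * Real.sqrt (q x).toReal ∂μ)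
          + (83/1000)*(∫ x, Real.sqrt (r x).toReal * Real.sqrt (q' x).toReal ∂μ) := by
      have I3 : Integrable (fun x => (4887/2000)*(r x).toReal
          + ((497/100 - w2/2)/2)*(q x).toReal + ((w2/2 - 83/1000)/2)*(q' x).toReal) μ :=
        ((hrInt.const_mul _).add (hqInt.const_mul _)).add (hq'Int.const_mul _)
      have I4 : Integrable (fun x => ((4887/2000)*(r x).toReal
          + ((497/100 - w2/2)/2)*(q x).toReal + ((w2/2 - 83/1000)/2)*(q' x).toReal)
          - (497/100)*(Real.sqrt (r x).toReal * Real.sqrt (q x).toReal)) μ :=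
        I3.sub (hSA.const_mul _)
      have I5 : Integrable (fun x => (4887/2000)*(r x).toReal
          + ((497/100 - w2/2)/2)*(q x).toReal) μ :=
        (hrInt.const_mul _).add (hqInt.const_mul _)
      rw [hRsEq, integral_add I4 (hSB.const_mul _), integral_sub I3 (hSA.const_mul _),
        integral_add I5 (hq'Int.const_mul _),
        integral_add (hrInt.const_mul _) (hqInt.const_mul _),
        integral_const_mul, integral_const_mul, integral_const_mul, integral_const_mul,
        integral_const_mul, hrI1, hqI1, hq'I1]
      ring
    calc ∫ x, psi2OfSqrt (densityRatio q q' x) ∂(μ.withDensity r)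
        = ∫ x, (r x).toReal * psi2OfSqrt (densityRatio q q' x) ∂μ := hconv _
      _ = ∫ x, (Real.sqrt (r x).toReal)^2
            * ((Real.sqrt (q' x).toReal - Real.sqrt (q x).toReal)
                / Real.sqrt ((q x).toReal + (q' x).toReal)) ∂μ := by
          refine integral_congr_ae ?_
          filter_upwards [hqae, hq'ae] with x h1 h2
          rw [psi_eq q q' x h1 h2, hS2 x]
      _ ≤ ∫ x, Rs (Real.sqrt (r x).toReal) (Real.sqrt (q x).toReal)
            (Real.sqrt (q' x).toReal) ∂μ := integral_mono hInt1 hRsInt hptS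
      _ = 4887/1000 - (497/100)*(∫ x, Real.sqrt (r x).toReal * Real.sqrt (q x).toReal ∂μ)
          + (83/1000)*(∫ x, Real.sqrt (r x).toReal * Real.sqrt (q' x).toReal ∂μ) := hRsI
      _ = 4.97 * hellingerSqDens μ r q - 0.083 * hellingerSqDens μ r q' := by
          rw [hH1, hH2]; norm_num; ring
  · -- second inequality
    have hptS2 : ∀ x : 𝒳, (Real.sqrt (r x).toReal)^2
        * ((Real.sqrt (q' x).toReal - Real.sqrt (q x).toReal)
            / Real.sqrt ((q x).toReal + (q' x).toReal))^2
        ≤ ((3+2*w2)/2) * ((Real.sqrt (r x).toReal - Real.sqrt (q x).toReal)^2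
            + (Real.sqrt (r x).toReal - Real.sqrt (q' x).toReal)^2) := by
      intro x
      have h := pointwise2 (Real.sqrt (r x).toReal) (Real.sqrt (q x).toReal)
        (Real.sqrt (q' x).toReal) (Real.sqrt_nonneg _) (Real.sqrt_nonneg _) (Real.sqrt_nonneg _)
      rw [hA2 x, hB2 x] at h
      exact h
    have hInt2 : Integrable (fun x => (Real.sqrt (r x).toReal)^2
        * ((Real.sqrt (q' x).toReal - Real.sqrt (q x).toReal)
            / Real.sqrt ((q x).toReal + (q' x).toReal))^2) μ := by
      refine hrInt.mono' ((hSm.pow_const 2).mul (hgm.pow_const 2)).aestronglyMeasurable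
        (Filter.Eventually.of_forall fun x => ?_)
      rw [Real.norm_eq_abs, abs_mul, abs_of_nonneg (sq_nonneg _)]
      have h1 : |((Real.sqrt (q' x).toReal - Real.sqrt (q x).toReal)
          / Real.sqrt ((q x).toReal + (q' x).toReal))^2| ≤ 1 := by
        rw [abs_of_nonneg (sq_nonneg _), ← sq_abs]
        nlinarith [hgle x, abs_nonneg ((Real.sqrt (q' x).toReal - Real.sqrt (q x).toReal)
          / Real.sqrt ((q x).toReal + (q' x).toReal))]
      calc (Real.sqrt (r x).toReal)^2 * |((Real.sqrt (q' x).toReal - Real.sqrt (q x).toReal)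
            / Real.sqrt ((q x).toReal + (q' x).toReal))^2|
            ≤ (Real.sqrt (r x).toReal)^2 * 1 :=
            mul_le_mul_of_nonneg_left h1 (sq_nonneg _)
        _ = (r x).toReal := by rw [mul_one, hS2 x]
    have hIntRHS : Integrable (fun x => ((3+2*w2)/2)
        * ((Real.sqrt (r x).toReal - Real.sqrt (q x).toReal)^2
            + (Real.sqrt (r x).toReal - Real.sqrt (q' x).toReal)^2)) μ :=
      (hIsubA.add hIsubB).const_mul _
    calc ∫ x, (psi2OfSqrt (densityRatio q q' x))^2 ∂(μ.withDensity r)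
        = ∫ x, (r x).toReal * (psi2OfSqrt (densityRatio q q' x))^2 ∂μ := hconv _
      _ = ∫ x, (Real.sqrt (r x).toReal)^2
            * ((Real.sqrt (q' x).toReal - Real.sqrt (q x).toReal)
                / Real.sqrt ((q x).toReal + (q' x).toReal))^2 ∂μ := by
          refine integral_congr_ae ?_
          filter_upwards [hqae, hq'ae] with x h1 h2
          rw [psi_eq q q' x h1 h2, hS2 x]
      _ ≤ ∫ x, ((3+2*w2)/2) * ((Real.sqrt (r x).toReal - Real.sqrt (q x).toReal)^2
            + (Real.sqrt (r x).toReal - Real.sqrt (q' x).toReal)^2) ∂μ :=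
          integral_mono hInt2 hIntRHS hptS2
      _ = ((3+2*w2)/2) * ((∫ x, (Real.sqrt (r x).toReal - Real.sqrt (q x).toReal)^2 ∂μ)
            + ∫ x, (Real.sqrt (r x).toReal - Real.sqrt (q' x).toReal)^2 ∂μ) := by
          rw [integral_const_mul, integral_add hIsubA hIsubB]
      _ = (3 + 2 * Real.sqrt 2) * (hellingerSqDens μ r q + hellingerSqDens μ r q') := by
          rw [hellingerSqDens, hellingerSqDens]
          show ((3+2*w2)/2) * _ = _
          rw [show w2 = Real.sqrt 2 from rfl]
          ring
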